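/- Let k be a field, n, s ≥ 2, and A = k[x,y]/(xⁿ − yˢ, xy). Let T^x be the two-term cochain complex A --·x--> A concentrated in degrees −1 and 0, an object of K^b(proj A), and let u : T^x → A⟦1⟧ ⊕ A be the chain map whose component in degree −1 is the identity A → A (into the summand A⟦1⟧) and whose component in degree 0 is multiplication by y : A → A (into the summand A). Then: (i) for every i ∈ ℤ, every morphism T^x → A⟦i⟧ in K^b(proj A) factors through u; and (ii) the mapping cone of u is isomorphic in K^b(proj A) to T^y, the complex A --·y--> A in degrees −1 and 0. -/

import Mathlib

set_option linter.unusedSectionVars false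

open CategoryTheory Category Limits ZeroObject

namespace ForPaper

variable {V : Type*} [Category V] [Preadditive V] [HasZeroObject V]

/-- The graded object with `P` in degree `-1`, `Q` in degree `0` and `0` elsewhere. -/
noncomputable def deg (P Q : V) (n : ℤ) : V :=
  if n = -1 then P else if n = 0 then Q else 0

lemma deg_neg_one (P Q : V) : deg P Q (-1) = P := if_pos rfl

lemma deg_zero (P Q : V) : deg P Q 0 = Q := by simp [deg]

lemma deg_eq_zero (P Q : V) (n : ℤ) (h₁ : n ≠ -1) (h₂ : n ≠ 0) : deg P Q n = 0 := by
  simp [deg, h₁, h₂]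

/-- The two-term cochain complex `P ⟶ Q` concentrated in (cohomological) degrees `-1`
and `0`. -/
noncomputable def twoTerm {P Q : V} (f : P ⟶ Q) : CochainComplex V ℤ where
  X := deg P Q
  d i j :=
    if h : i = -1 ∧ j = 0 then
      eqToHom (by rw [h.1, deg_neg_one]) ≫ f ≫ eqToHom (by rw [h.2, deg_zero])
    else 0
  shape i j hij := by
    rw [dif_neg]
    rintro ⟨rfl, rfl⟩
    exact hij (by simp)
  d_comp_d' i j l _ _ := by
    by_cases h : i = -1 ∧ j = 0
    · have h' : ¬(j = -1 ∧ l = 0) := by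
        rintro ⟨rfl, -⟩
        exact absurd h.2 (by decide)
      rw [dif_neg h', comp_zero]
    · rw [dif_neg h, zero_comp]

lemma twoTerm_X_neg_one {P Q : V} (f : P ⟶ Q) : (twoTerm f).X (-1) = P := deg_neg_one P Q

lemma twoTerm_X_zero {P Q : V} (f : P ⟶ Q) : (twoTerm f).X 0 = Q := deg_zero P Q

lemma twoTerm_d {P Q : V} (f : P ⟶ Q) :
    (twoTerm f).d (-1) 0 =
      eqToHom (twoTerm_X_neg_one f) ≫ f ≫ eqToHom (twoTerm_X_zero f).symm := by
  simp [twoTerm]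

/-- The stalk complex with `Q` in degree `0`, realized as a two-term complex. -/
noncomputable def stalk0 (Q : V) : CochainComplex V ℤ := twoTerm (0 : 0 ⟶ Q)

/-- The stalk complex with `P` in degree `-1` (i.e. `P⟦1⟧`), realized as a two-term
complex. -/
noncomputable def stalkNeg1 (P : V) : CochainComplex V ℤ := twoTerm (0 : P ⟶ 0)

lemma stalk0_X_zero (Q : V) : (stalk0 Q).X 0 = Q := deg_zero (0 : V) Q

lemma stalkNeg1_X_neg_one (P : V) : (stalkNeg1 P).X (-1) = P := deg_neg_one P (0 : V)

end ForPaper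

open ForPaper

set_option synthInstance.maxHeartbeats 1000000
set_option maxHeartbeats 1000000

universe u

/-- The quotient functor from complexes to `K(Mod A)`. -/
noncomputable abbrev Kq (A : Type u) [Ring A] :
    CochainComplex (ModuleCat.{u} A) ℤ ⥤
      HomotopyCategory (ModuleCat.{u} A) (ComplexShape.up ℤ) :=
  HomotopyCategory.quotient _ _

/-- Multiplication by `a` on `A`, as an endomorphism of `A` in `ModuleCat A`. -/
noncomputable def mulMap (A : Type u) [CommRing A] (a : A) :
    ModuleCat.of A A ⟶ ModuleCat.of A A :=
  ModuleCat.ofHom (LinearMap.toSpanSingleton A A a)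

/-- The algebra `k[x,y]/(xⁿ - yˢ, xy)`. -/
abbrev DihedralAlg (k : Type u) [Field k] (n s : ℕ) : Type u :=
  MvPolynomial (Fin 2) k ⧸
    Ideal.span {(MvPolynomial.X 0 : MvPolynomial (Fin 2) k) ^ n - MvPolynomial.X 1 ^ s,
      (MvPolynomial.X 0 : MvPolynomial (Fin 2) k) * MvPolynomial.X 1}

/-- The class of `x` in `k[x,y]/(xⁿ - yˢ, xy)`. -/
noncomputable abbrev dihedralX (k : Type u) [Field k] (n s : ℕ) : DihedralAlg k n s :=
  Ideal.Quotient.mk _ (MvPolynomial.X 0 : MvPolynomial (Fin 2) k)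

/-- The class of `y` in `k[x,y]/(xⁿ - yˢ, xy)`. -/
noncomputable abbrev dihedralY (k : Type u) [Field k] (n s : ℕ) : DihedralAlg k n s :=
  Ideal.Quotient.mk _ (MvPolynomial.X 1 : MvPolynomial (Fin 2) k)

namespace Aux
open ForPaper CochainComplex CochainComplex.HomComplex

variable {V : Type*} [Category V] [Preadditive V] [HasZeroObject V]

lemma isZero_twoTerm_X {P Q : V} (f : P ⟶ Q) (p : ℤ) (h1 : p ≠ -1) (h2 : p ≠ 0) :
    IsZero ((twoTerm f).X p) :=
  (isZero_zero V).of_iso (eqToIso (deg_eq_zero P Q p h1 h2))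

lemma twoTerm_d_ne {P Q : V} (f : P ⟶ Q) (i j : ℤ) (h : ¬(i = -1 ∧ j = 0)) :
    (twoTerm f).d i j = 0 := dif_neg h

lemma twoTerm_zero_d (P Q : V) (i j : ℤ) : (twoTerm (0 : P ⟶ Q)).d i j = 0 := by
  by_cases h : i = -1 ∧ j = 0
  · obtain ⟨rfl, rfl⟩ := h
    rw [twoTerm_d]
    simp
  · exact twoTerm_d_ne _ _ _ h

/-- constructor for chain maps between two-term complexes -/
noncomputable def twoTermHom {P Q P' Q' : V} (f : P ⟶ Q) (f' : P' ⟶ Q')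
    (α : P ⟶ P') (β : Q ⟶ Q') (w : f ≫ β = α ≫ f') :
    twoTerm f ⟶ twoTerm f' where
  f n :=
    if h1 : n = -1 then
      eqToHom (by rw [h1]; exact twoTerm_X_neg_one f) ≫ α ≫
        eqToHom (by rw [h1]; exact (twoTerm_X_neg_one f').symm)
    else if h0 : n = 0 then
      eqToHom (by rw [h0]; exact twoTerm_X_zero f) ≫ β ≫
        eqToHom (by rw [h0]; exact (twoTerm_X_zero f').symm)
    else 0
  comm' i j hij := by
    change i + 1 = j at hij
    by_cases hi : i = -1
    · subst hi
      obtain rfl : j = 0 := by omega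
      rw [twoTerm_d, twoTerm_d]
      split_ifs <;> first | contradiction | omega | simp [reassoc_of% w]
    · rw [twoTerm_d_ne f i j (by tauto), twoTerm_d_ne f' i j (by tauto), zero_comp, comp_zero]

lemma twoTermHom_f_neg_one {P Q P' Q' : V} (f : P ⟶ Q) (f' : P' ⟶ Q')
    (α : P ⟶ P') (β : Q ⟶ Q') (w : f ≫ β = α ≫ f') :
    (twoTermHom f f' α β w).f (-1) =
      eqToHom (twoTerm_X_neg_one f) ≫ α ≫ eqToHom (twoTerm_X_neg_one f').symm := by
  simp [twoTermHom]

lemma twoTermHom_f_zero {P Q P' Q' : V} (f : P ⟶ Q) (f' : P' ⟶ Q')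
    (α : P ⟶ P') (β : Q ⟶ Q') (w : f ≫ β = α ≫ f') :
    (twoTermHom f f' α β w).f 0 =
      eqToHom (twoTerm_X_zero f) ≫ β ≫ eqToHom (twoTerm_X_zero f').symm := by
  rw [twoTermHom]
  dsimp only
  rw [dif_neg (by decide : ¬ (0 : ℤ) = -1), dif_pos rfl]

end Aux

namespace Aux
open ForPaper CochainComplex CochainComplex.HomComplex

section ConeSec

variable {A : Type u} [CommRing A]

variable {A : Type u} [CommRing A]

lemma ts_comp (a b : A) : (LinearMap.toSpanSingleton A A b).comp
    (LinearMap.toSpanSingleton A A a) = LinearMap.toSpanSingleton A A (a * b) := by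
  apply LinearMap.ext_ring
  simp [LinearMap.toSpanSingleton_apply, smul_eq_mul, mul_comm]

lemma mulMap_comp (a b : A) : mulMap A a ≫ mulMap A b = mulMap A (a * b) := by
  show ModuleCat.ofHom ((LinearMap.toSpanSingleton A A b).comp
    (LinearMap.toSpanSingleton A A a)) = _
  rw [ts_comp]
  rfl

lemma exists_mulMap (g : ModuleCat.of A A ⟶ ModuleCat.of A A) : ∃ c : A, g = mulMap A c := by
  refine ⟨show A from g (show ↑(ModuleCat.of A A) from (1 : A)), ?_⟩
  apply ModuleCat.hom_ext
  apply LinearMap.ext_ring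
  show g _ = (LinearMap.toSpanSingleton A A _) 1
  rw [LinearMap.toSpanSingleton_apply, one_smul]

lemma mulMap_inj (a b : A) (h : mulMap A a = mulMap A b) : a = b := by
  have := congrArg (fun g : ModuleCat.of A A ⟶ ModuleCat.of A A =>
    (show A from g (show ↑(ModuleCat.of A A) from (1 : A)))) h
  have h2 : (1 : A) • a = (1 : A) • b := by simpa [mulMap] using this
  simpa using h2

lemma mulMap_id : mulMap A 1 = 𝟙 (ModuleCat.of A A) := by
  apply ModuleCat.hom_ext
  apply LinearMap.ext_ring
  show (LinearMap.toSpanSingleton A A 1) 1 = 1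
  rw [LinearMap.toSpanSingleton_apply, one_smul]


lemma twoTerm_X_M {M : ModuleCat.{u} A} (f : M ⟶ M) (i : ℤ) (hi : i = -1 ∨ i = 0) :
    (twoTerm f).X i = M := by
  rcases hi with rfl | rfl
  · exact twoTerm_X_neg_one f
  · exact twoTerm_X_zero f

variable (a b : A)

/-- `α : Cochain F T (-1)`, component `id` at `(0, -1)`. -/
noncomputable def αc : Cochain (twoTerm (mulMap A a)) (twoTerm (mulMap A b)) (-1) :=
  Cochain.mk fun p q hpq =>
    if h : p = 0 then
      eqToHom (by
        subst h
        obtain rfl : q = -1 := by omega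
        exact (twoTerm_X_zero _).trans (twoTerm_X_neg_one _).symm)
    else 0

lemma αc_v0 (hpq : (0 : ℤ) + (-1) = -1) :
    (αc a b).v 0 (-1) hpq = eqToHom ((twoTerm_X_zero (mulMap A a)).trans
      (twoTerm_X_neg_one (mulMap A b)).symm) := by
  simp [αc, Cochain.mk_v]

lemma αc_v_ne (p q : ℤ) (hpq : p + (-1) = q) (h : p ≠ 0) : (αc a b).v p q hpq = 0 :=
  dif_neg h

/-- `γ : Cochain T F 1`, component `id` at `(-1, 0)`. -/
noncomputable def γc : Cochain (twoTerm (mulMap A b)) (twoTerm (mulMap A a)) 1 :=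
  Cochain.mk fun p q hpq =>
    if h : p = -1 then
      eqToHom (by
        subst h
        obtain rfl : q = 0 := by omega
        exact (twoTerm_X_neg_one _).trans (twoTerm_X_zero _).symm)
    else 0

lemma γc_v0 (hpq : (-1 : ℤ) + 1 = 0) :
    (γc a b).v (-1) 0 hpq = eqToHom ((twoTerm_X_neg_one (mulMap A b)).trans
      (twoTerm_X_zero (mulMap A a)).symm) := by
  simp [γc, Cochain.mk_v]

lemma γc_v_ne (p q : ℤ) (hpq : p + 1 = q) (h : p ≠ -1) : (γc a b).v p q hpq = 0 :=
  dif_neg h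

/-- `σ : Cochain T G 0`, component `id` at `(0, 0)`. -/
noncomputable def σc : Cochain (twoTerm (mulMap A b))
    (twoTerm (0 : ModuleCat.of A A ⟶ ModuleCat.of A A)) 0 :=
  Cochain.mk fun p q hpq =>
    if h : p = 0 then
      eqToHom (by
        subst h
        obtain rfl : q = 0 := by omega
        exact (twoTerm_X_zero _).trans (twoTerm_X_zero _).symm)
    else 0

lemma σc_v0 (hpq : (0 : ℤ) + 0 = 0) :
    (σc b).v 0 0 hpq = eqToHom ((twoTerm_X_zero (mulMap A b)).trans
      (twoTerm_X_zero (0 : ModuleCat.of A A ⟶ ModuleCat.of A A)).symm) := by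
  simp [σc, Cochain.mk_v]

lemma σc_v_ne (p q : ℤ) (hpq : p + 0 = q) (h : p ≠ 0) : (σc b).v p q hpq = 0 :=
  dif_neg h

/-- `w : Cochain G F 0`, component `id` at `(-1, -1)`. -/
noncomputable def wc : Cochain (twoTerm (0 : ModuleCat.of A A ⟶ ModuleCat.of A A))
    (twoTerm (mulMap A a)) 0 :=
  Cochain.mk fun p q hpq =>
    if h : p = -1 then
      eqToHom (by
        subst h
        obtain rfl : q = -1 := by omega
        exact (twoTerm_X_neg_one _).trans (twoTerm_X_neg_one _).symm)
    else 0

lemma wc_v0 (hpq : (-1 : ℤ) + 0 = -1) :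
    (wc a).v (-1) (-1) hpq = eqToHom ((twoTerm_X_neg_one
      (0 : ModuleCat.of A A ⟶ ModuleCat.of A A)).trans
      (twoTerm_X_neg_one (mulMap A a)).symm) := by
  simp [wc, Cochain.mk_v]

lemma wc_v_ne (p q : ℤ) (hpq : p + 0 = q) (h : p ≠ -1) : (wc a).v p q hpq = 0 :=
  dif_neg h

variable (hab : a * b = 0)

lemma mulMap_zero : mulMap A (0 : A) = 0 := by
  apply ModuleCat.hom_ext
  apply LinearMap.ext_ring
  show (LinearMap.toSpanSingleton A A 0) 1 = _
  simp

/-- `β : G ⟶ T` with components `·a` and `id`. -/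
noncomputable def βm : twoTerm (0 : ModuleCat.of A A ⟶ ModuleCat.of A A) ⟶
    twoTerm (mulMap A b) :=
  twoTermHom _ _ (mulMap A a) (𝟙 _) (by
    rw [zero_comp, mulMap_comp, hab, mulMap_zero])

end ConeSec
end Aux

namespace Aux
open ForPaper CochainComplex CochainComplex.HomComplex

section ConeSec2

variable {A : Type u} [CommRing A] (a b : A) (hab : a * b = 0)
  (u : twoTerm (mulMap A a) ⟶ twoTerm (0 : ModuleCat.of A A ⟶ ModuleCat.of A A))
  (hu1 : u.f (-1) = eqToHom ((twoTerm_X_neg_one (mulMap A a)).trans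
    (twoTerm_X_neg_one (0 : ModuleCat.of A A ⟶ ModuleCat.of A A)).symm))
  (hu0 : u.f 0 = eqToHom (twoTerm_X_zero (mulMap A a)) ≫ mulMap A b ≫
    eqToHom (twoTerm_X_zero (0 : ModuleCat.of A A ⟶ ModuleCat.of A A)).symm)

include hu1 hu0 in
lemma E1 : δ (-1) 0 (αc a b) = Cochain.ofHom (u ≫ βm a b hab) := by
  apply Cochain.ext₀
  intro p
  rw [Cochain.ofHom_v, HomologicalComplex.comp_f]
  by_cases h0 : p = 0
  · subst h0
    rw [δ_v (-1) 0 (by norm_num) _ 0 0 (add_zero 0) (-1) 1 (by norm_num) (by norm_num),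
      αc_v0, twoTerm_d, twoTerm_d_ne (mulMap A a) 0 1 (by omega), hu0, βm, twoTermHom_f_zero]
    simp
  · by_cases h1 : p = -1
    · subst h1
      rw [δ_v (-1) 0 (by norm_num) _ (-1) (-1) (add_zero _) (-2) 0 (by norm_num) (by norm_num),
        αc_v_ne a b (-1) (-2) (by norm_num) (by omega), twoTerm_d, αc_v0, hu1, βm,
        twoTermHom_f_neg_one]
      simp
    · exact (isZero_twoTerm_X (mulMap A a) p h1 h0).eq_of_src _ _

lemma E2 : δ 1 2 (γc a b) = 0 := by
  apply Cochain.ext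
  intro p q hpq
  rw [Cochain.zero_v]
  by_cases h1 : p = -1
  · subst h1
    obtain rfl : q = 1 := by omega
    rw [δ_v 1 2 (by norm_num) _ (-1) 1 (by norm_num) 0 0 (by norm_num) (by norm_num),
      twoTerm_d_ne (mulMap A a) 0 1 (by omega), γc_v_ne a b 0 1 (by norm_num) (by omega)]
    simp
  · rw [δ_v 1 2 (by norm_num) _ p q hpq (q - 1) (p + 1) (by omega) rfl,
      twoTerm_d_ne (mulMap A b) p (p + 1) (by tauto), γc_v_ne a b p (q - 1) (by omega) h1]
    simp

include hu0 in
lemma E3 : δ 0 1 (σc b) + (γc a b).comp (Cochain.ofHom u) (add_zero 1) = 0 := by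
  apply Cochain.ext
  intro p q hpq
  rw [Cochain.add_v, Cochain.zero_v, Cochain.comp_zero_cochain_v]
  by_cases h1 : p = -1
  · subst h1
    obtain rfl : q = 0 := by omega
    rw [δ_v 0 1 (by norm_num) _ (-1) 0 (by norm_num) (-1) 0 (by norm_num) (by norm_num),
      twoTerm_zero_d, comp_zero, twoTerm_d, γc_v0, σc_v0, Cochain.ofHom_v, hu0]
    simp
  · by_cases h0 : p = 0
    · subst h0
      obtain rfl : q = 1 := by omega
      rw [δ_v 0 1 (by norm_num) _ 0 1 (by norm_num) 0 1 (by norm_num) (by norm_num),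
        twoTerm_zero_d, comp_zero, twoTerm_d_ne (mulMap A b) 0 1 (by omega),
        γc_v_ne a b 0 1 (by norm_num) (by omega)]
      simp
    · exact (isZero_twoTerm_X (mulMap A b) p h1 h0).eq_of_src _ _

/-- the map `mappingCone u ⟶ T^b` -/
noncomputable def pm : CochainComplex.mappingCone u ⟶ twoTerm (mulMap A b) :=
  CochainComplex.mappingCone.desc u (αc a b) (βm a b hab) (E1 a b hab u hu1 hu0)

/-- the cocycle `γ` -/
noncomputable def γco : Cocycle (twoTerm (mulMap A b)) (twoTerm (mulMap A a)) 1 :=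
  Cocycle.mk (γc a b) 2 rfl (E2 a b)

include hu0 in
lemma E3' : δ 0 1 (σc b) + ((γco a b : Cocycle _ _ 1) : Cochain (twoTerm (mulMap A b))
    (twoTerm (mulMap A a)) 1).comp (Cochain.ofHom u) (add_zero 1) = 0 := E3 a b u hu0

/-- the map `T^b ⟶ mappingCone u` -/
noncomputable def qm : twoTerm (mulMap A b) ⟶ CochainComplex.mappingCone u :=
  CochainComplex.mappingCone.lift u (γco a b) (σc b) (E3' a b u hu0)

end ConeSec2
end Aux

namespace Aux
open ForPaper CochainComplex CochainComplex.HomComplex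

section ConeSec3

variable {A : Type u} [CommRing A] (a b : A) (hab : a * b = 0)
  (u : twoTerm (mulMap A a) ⟶ twoTerm (0 : ModuleCat.of A A ⟶ ModuleCat.of A A))
  (hu1 : u.f (-1) = eqToHom ((twoTerm_X_neg_one (mulMap A a)).trans
    (twoTerm_X_neg_one (0 : ModuleCat.of A A ⟶ ModuleCat.of A A)).symm))
  (hu0 : u.f 0 = eqToHom (twoTerm_X_zero (mulMap A a)) ≫ mulMap A b ≫
    eqToHom (twoTerm_X_zero (0 : ModuleCat.of A A ⟶ ModuleCat.of A A)).symm)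

lemma γco_coe : ((γco a b : Cocycle _ _ 1) : Cochain (twoTerm (mulMap A b))
    (twoTerm (mulMap A a)) 1) = γc a b := rfl

include hu1 hu0 in
lemma E4 : qm a b u hu0 ≫ pm a b hab u hu1 hu0 = 𝟙 (twoTerm (mulMap A b)) := by
  apply HomologicalComplex.hom_ext
  intro n
  rw [HomologicalComplex.comp_f, HomologicalComplex.id_f]
  by_cases h1 : n = -1
  · subst h1
    rw [qm, mappingCone.lift_f _ _ _ _ (-1) 0 (by norm_num), γco_coe, γc_v0,
      σc_v_ne b (-1) (-1) (by norm_num) (by omega), pm, zero_comp, add_zero,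
      assoc, mappingCone.inl_v_desc_f, αc_v0, eqToHom_trans]
    simp
  · by_cases h0 : n = 0
    · subst h0
      rw [qm, mappingCone.lift_f _ _ _ _ 0 1 (by norm_num), γco_coe,
        γc_v_ne a b 0 1 (by norm_num) (by omega), σc_v0, pm, zero_comp, zero_add,
        assoc, mappingCone.inr_f_desc_f, βm, twoTermHom_f_zero]
      simp
    · exact (isZero_twoTerm_X (mulMap A b) n h1 h0).eq_of_src _ _

/-- the homotopy cochain -/
noncomputable def γ₂ : Cochain (twoTerm (0 : ModuleCat.of A A ⟶ ModuleCat.of A A))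
    (CochainComplex.mappingCone u) (-1) :=
  -((wc a).comp (mappingCone.inl u) (zero_add (-1)))

include hu1 hu0 in
lemma E5h1 : (mappingCone.inl u).comp
      (Cochain.ofHom (pm a b hab u hu1 hu0 ≫ qm a b u hu0)) (add_zero (-1)) =
    δ (-2) (-1) (0 : Cochain (twoTerm (mulMap A a)) (CochainComplex.mappingCone u) (-2)) +
      (Cochain.ofHom u).comp (γ₂ a u) (zero_add (-1)) +
      (mappingCone.inl u).comp (Cochain.ofHom (𝟙 (CochainComplex.mappingCone u)))
        (add_zero (-1)) := by
  apply Cochain.ext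
  intro p q hpq
  simp only [δ_zero, Cochain.add_v, Cochain.zero_v, Cochain.comp_zero_cochain_v,
    Cochain.zero_cochain_comp_v, Cochain.ofHom_v, HomologicalComplex.id_f, comp_id,
    HomologicalComplex.comp_f, γ₂, Cochain.neg_v, zero_add]
  by_cases h0 : p = 0
  · subst h0
    obtain rfl : q = -1 := by omega
    rw [← assoc, pm, mappingCone.inl_v_desc_f, αc_v0, qm,
      mappingCone.lift_f _ _ _ _ (-1) 0 (by norm_num), γco_coe, γc_v0,
      σc_v_ne b (-1) (-1) (by norm_num) (by omega),
      wc_v_ne a 0 0 (by norm_num) (by omega)]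
    simp
  · by_cases h1 : p = -1
    · subst h1
      obtain rfl : q = -2 := by omega
      rw [← assoc, pm, mappingCone.inl_v_desc_f, αc_v_ne a b (-1) (-2) (by norm_num) (by omega),
        wc_v0, hu1]
      simp
    · exact (isZero_twoTerm_X (mulMap A a) p h1 h0).eq_of_src _ _

include hu1 hu0 in
lemma E5h2 : Cochain.ofHom (mappingCone.inr u ≫ (pm a b hab u hu1 hu0 ≫ qm a b u hu0)) =
    δ (-1) 0 (γ₂ a u) +
      Cochain.ofHom (mappingCone.inr u ≫ 𝟙 (CochainComplex.mappingCone u)) := by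
  apply Cochain.ext₀
  intro p
  rw [Cochain.add_v, Cochain.ofHom_v, Cochain.ofHom_v, comp_id,
    HomologicalComplex.comp_f, HomologicalComplex.comp_f, ← assoc, pm,
    mappingCone.inr_f_desc_f]
  by_cases h1 : p = -1
  · subst h1
    rw [δ_v (-1) 0 (by norm_num) _ (-1) (-1) (add_zero _) (-2) 0 (by norm_num) (by norm_num),
      twoTerm_zero_d, zero_comp, smul_zero, add_zero, γ₂, Cochain.neg_v,
      Cochain.zero_cochain_comp_v, wc_v0, Preadditive.neg_comp, assoc,
      mappingCone.inl_v_d u (-1) (-2) 0 (by norm_num) (by norm_num), hu1, twoTerm_d,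
      βm, twoTermHom_f_neg_one, qm, mappingCone.lift_f _ _ _ _ (-1) 0 (by norm_num),
      γco_coe, γc_v0, σc_v_ne b (-1) (-1) (by norm_num) (by omega)]
    simp [Preadditive.comp_sub]
  · by_cases h0 : p = 0
    · subst h0
      rw [δ_v (-1) 0 (by norm_num) _ 0 0 (add_zero _) (-1) 1 (by norm_num) (by norm_num),
        twoTerm_zero_d, zero_comp, smul_zero, add_zero, γ₂, Cochain.neg_v,
        Cochain.zero_cochain_comp_v, wc_v_ne a 0 0 (by norm_num) (by omega),
        βm, twoTermHom_f_zero, qm, mappingCone.lift_f _ _ _ _ 0 1 (by norm_num),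
        γco_coe, γc_v_ne a b 0 1 (by norm_num) (by omega), σc_v0]
      simp
    · exact (isZero_twoTerm_X (0 : ModuleCat.of A A ⟶ ModuleCat.of A A) p h1 h0).eq_of_src _ _

/-- the homotopy equivalence between the mapping cone of `u` and `T^b` -/
noncomputable def hoEquiv : HomotopyEquiv (CochainComplex.mappingCone u)
    (twoTerm (mulMap A b)) where
  hom := pm a b hab u hu1 hu0
  inv := qm a b u hu0
  homotopyHomInvId := mappingCone.descHomotopy u _ _ 0 (γ₂ a u)
    (E5h1 a b hab u hu1 hu0) (E5h2 a b hab u hu1 hu0)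
  homotopyInvHomId := Homotopy.ofEq (E4 a b hab u hu1 hu0)

end ConeSec3
end Aux

namespace Aux
open ForPaper CochainComplex CochainComplex.HomComplex

section FactorSec

variable {A : Type u} [CommRing A]

lemma isZero_stalk0_X (Q : ModuleCat.{u} A) (m : ℤ) (hm : m ≠ 0) :
    IsZero ((stalk0 Q).X m) := by
  by_cases h1 : m = -1
  · subst h1
    exact (isZero_zero _).of_iso (eqToIso (deg_neg_one 0 Q))
  · exact (isZero_zero _).of_iso (eqToIso (deg_eq_zero 0 Q m h1 hm))

lemma isZero_stalk0_shift_X (Q : ModuleCat.{u} A) (i p : ℤ) (hp : p + i ≠ 0) :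
    IsZero (((stalk0 Q)⟦i⟧).X p) :=
  isZero_stalk0_X Q (p + i) hp

lemma stalk0_shift_d (Q : ModuleCat.{u} A) (i p q : ℤ) :
    ((stalk0 Q)⟦i⟧).d p q = 0 := by
  rw [CochainComplex.shiftFunctor_obj_d', stalk0, twoTerm_zero_d, smul_zero]
  rfl

lemma stalk0_shift_X_eq (Q : ModuleCat.{u} A) (i p : ℤ) (hp : p + i = 0) :
    ((stalk0 Q)⟦i⟧).X p = Q := by
  show (stalk0 Q).X (p + i) = Q
  rw [hp]
  exact stalk0_X_zero Q

/-- chain maps into a shifted stalk need no compatibility -/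
noncomputable def mkToStalk (K : CochainComplex (ModuleCat.{u} A) ℤ)
    (hK : ∀ p q, K.d p q = 0) (Q : ModuleCat.{u} A) (i : ℤ)
    (v : ∀ p, K.X p ⟶ ((stalk0 Q)⟦i⟧).X p) : K ⟶ (stalk0 Q)⟦i⟧ where
  f := v
  comm' p q _ := by rw [stalk0_shift_d, comp_zero, hK, zero_comp]

variable (a b : A)
  (u : twoTerm (mulMap A a) ⟶ twoTerm (0 : ModuleCat.of A A ⟶ ModuleCat.of A A))
  (hu1 : u.f (-1) = eqToHom ((twoTerm_X_neg_one (mulMap A a)).trans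
    (twoTerm_X_neg_one (0 : ModuleCat.of A A ⟶ ModuleCat.of A A)).symm))
  (hu0 : u.f 0 = eqToHom (twoTerm_X_zero (mulMap A a)) ≫ mulMap A b ≫
    eqToHom (twoTerm_X_zero (0 : ModuleCat.of A A ⟶ ModuleCat.of A A)).symm)
  (hann : ∀ c : A, a * c = 0 → ∃ c', c = b * c')

include hu1 hu0 hann in
lemma factor (i : ℤ) (f : twoTerm (mulMap A a) ⟶ (stalk0 (ModuleCat.of A A))⟦i⟧) :
    ∃ ψ : twoTerm (0 : ModuleCat.of A A ⟶ ModuleCat.of A A) ⟶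
      (stalk0 (ModuleCat.of A A))⟦i⟧, u ≫ ψ = f := by
  by_cases hi0 : i = 0
  · subst hi0
    -- extract the degree-0 component of f
    have hS : ((stalk0 (ModuleCat.of A A))⟦(0:ℤ)⟧).X 0 = ModuleCat.of A A :=
      stalk0_shift_X_eq _ 0 0 (by norm_num)
    set g : ModuleCat.of A A ⟶ ModuleCat.of A A :=
      eqToHom (twoTerm_X_zero (mulMap A a)).symm ≫ f.f 0 ≫ eqToHom hS with hg
    have hd0 : (twoTerm (mulMap A a)).d (-1) 0 ≫ f.f 0 = 0 := by
      rw [← f.comm (-1) 0, stalk0_shift_d, comp_zero]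
    have hcond : mulMap A a ≫ g = 0 := by
      have hkey : mulMap A a ≫ g = eqToHom (twoTerm_X_neg_one (mulMap A a)).symm ≫
          ((twoTerm (mulMap A a)).d (-1) 0 ≫ f.f 0) ≫ eqToHom hS := by
        rw [twoTerm_d, hg]
        simp only [assoc, eqToHom_trans_assoc, eqToHom_refl, id_comp]
      rw [hkey, hd0]
      simp
      rfl
    obtain ⟨c, hc⟩ := exists_mulMap g
    have hac : a * c = 0 := by
      apply mulMap_inj
      rw [← mulMap_comp, ← hc, hcond, mulMap_zero]
    obtain ⟨c', hc'⟩ := hann c hac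
    refine ⟨mkToStalk _ (twoTerm_zero_d _ _) _ _ (fun p =>
      if hp : p = 0 then
        eqToHom (by rw [hp]; exact twoTerm_X_zero _) ≫ mulMap A c' ≫
          eqToHom (by rw [hp]; exact hS.symm)
      else 0), ?_⟩
    apply HomologicalComplex.hom_ext
    intro p
    rw [HomologicalComplex.comp_f]
    by_cases hp : p = 0
    · subst hp
      show u.f 0 ≫ (eqToHom (twoTerm_X_zero _) ≫ mulMap A c' ≫ eqToHom hS.symm) = f.f 0
      have hfg : f.f 0 = eqToHom (twoTerm_X_zero (mulMap A a)) ≫ g ≫ eqToHom hS.symm := by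
        rw [hg]; simp; rfl
      rw [hu0, hfg, hc, hc', ← mulMap_comp]
      simp
    · exact (isZero_stalk0_shift_X _ 0 p (by omega)).eq_of_tgt _ _
  · by_cases hi1 : i = 1
    · subst hi1
      refine ⟨mkToStalk _ (twoTerm_zero_d _ _) _ _ (fun p =>
        if hp : p = -1 then
          eqToHom (by rw [hp]; exact (twoTerm_X_neg_one _).trans (twoTerm_X_neg_one (mulMap A a)).symm) ≫ f.f (-1) ≫ eqToHom (by rw [hp])
        else 0), ?_⟩
      apply HomologicalComplex.hom_ext
      intro p
      rw [HomologicalComplex.comp_f]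
      by_cases hp : p = -1
      · subst hp
        show u.f (-1) ≫ (eqToHom _ ≫ f.f (-1) ≫ eqToHom rfl) = f.f (-1)
        rw [hu1]
        simp
        rfl
      · exact (isZero_stalk0_shift_X _ 1 p (by omega)).eq_of_tgt _ _
    · refine ⟨0, ?_⟩
      rw [comp_zero]
      apply HomologicalComplex.hom_ext
      intro p
      rw [HomologicalComplex.zero_f]
      by_cases hp : p = -1
      · exact (isZero_stalk0_shift_X _ i p (by omega)).eq_of_tgt _ _
      · by_cases hp0 : p = 0
        · exact (isZero_stalk0_shift_X _ i p (by omega)).eq_of_tgt _ _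
        · exact (isZero_twoTerm_X (mulMap A a) p hp hp0).eq_of_src _ _

end FactorSec
end Aux

namespace Aux
open MvPolynomial

variable (k : Type u) [Field k]

/-- evaluation sending X0 ↦ X, X1 ↦ 0 -/
noncomputable def e0 : MvPolynomial (Fin 2) k →ₐ[k] Polynomial k :=
  aeval ![Polynomial.X, 0]

/-- evaluation sending X0 ↦ 0, X1 ↦ X -/
noncomputable def e1 : MvPolynomial (Fin 2) k →ₐ[k] Polynomial k :=
  aeval ![0, Polynomial.X]

/-- lift back : X ↦ X0 -/
noncomputable def L : Polynomial k →ₐ[k] MvPolynomial (Fin 2) k :=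
  Polynomial.aeval (X 0)

lemma sub_L_e0_mem (q : MvPolynomial (Fin 2) k) :
    q - L k (e0 k q) ∈ Ideal.span {(X 1 : MvPolynomial (Fin 2) k)} := by
  induction q using MvPolynomial.induction_on with
  | C c =>
      simp only [e0, L, aeval_C, Polynomial.aeval_C]
      simp only [algebraMap_eq, Polynomial.algebraMap_eq]
      -- algebraMap k (Polynomial k) c = Polynomial.C c, then aeval of that is C c
      rw [show (Polynomial.aeval (X 0 : MvPolynomial (Fin 2) k)) (Polynomial.C c) = C c from
        Polynomial.aeval_C _ _]
      simp
  | add p q hp hq =>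
      have := Ideal.add_mem _ hp hq
      simpa [map_add, sub_add_sub_comm] using this
  | mul_X p i hp =>
      fin_cases i <;> simp only [Fin.mk_zero, Fin.mk_one, Fin.isValue]
      · have : p * X 0 - L k (e0 k (p * X 0)) = (p - L k (e0 k p)) * X 0 := by
          simp only [map_mul, e0, L, aeval_X]
          rw [show (![Polynomial.X, 0] : Fin 2 → Polynomial k) 0 = Polynomial.X from rfl]
          rw [show (Polynomial.aeval (X 0 : MvPolynomial (Fin 2) k)) Polynomial.X
            = X 0 from Polynomial.aeval_X _]
          ring
        rw [this]
        exact Ideal.mul_mem_right _ _ hp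
      · have : e0 k (p * X 1) = 0 := by
          simp only [map_mul, e0, aeval_X]
          rw [show (![Polynomial.X, 0] : Fin 2 → Polynomial k) 1 = 0 from rfl]
          simp
        rw [this, map_zero, sub_zero]
        exact Ideal.mul_mem_left _ _ (Ideal.subset_span (by simp))
end Aux

namespace Aux
open MvPolynomial

variable {k : Type u} [Field k]

lemma ann_x {n s : ℕ} (hn : 1 ≤ n) (hs : 1 ≤ s) (c : DihedralAlg k n s)
    (h : dihedralX k n s * c = 0) : ∃ c', c = dihedralY k n s * c' := by
  obtain ⟨p, rfl⟩ := Ideal.Quotient.mk_surjective c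
  rw [← map_mul, Ideal.Quotient.eq_zero_iff_mem, Ideal.mem_span_pair] at h
  obtain ⟨a, b, hab⟩ := h
  -- apply e1
  have h1 : e1 k a = 0 := by
    have h1' := congrArg (e1 k) hab
    simp only [map_add, map_mul, map_sub, map_pow, e1, aeval_X,
      Matrix.cons_val_zero, Matrix.cons_val_one, Matrix.head_cons] at h1'
    rw [zero_pow (by omega)] at h1'
    have h1'' : (aeval ![0, Polynomial.X] a : Polynomial k) * Polynomial.X ^ s = 0 := by
      linear_combination -h1'
    show (aeval ![0, Polynomial.X] a : Polynomial k) = 0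
    rcases mul_eq_zero.mp h1'' with h | h
    · exact h
    · exact absurd h (pow_ne_zero _ Polynomial.X_ne_zero)
  -- constant coefficient of e0 a vanishes
  have hcoeff : (e0 k a).coeff 0 = 0 := by
    have hcomp : (Polynomial.aeval (0 : k)).comp (e0 k) =
        (Polynomial.aeval (0 : k)).comp (e1 k) := by
      apply MvPolynomial.algHom_ext
      intro i
      fin_cases i <;>
        simp [e0, e1]
    have := congrArg (fun F : MvPolynomial (Fin 2) k →ₐ[k] k => F a) hcomp
    simp only [AlgHom.comp_apply, h1, map_zero] at this
    rw [Polynomial.coeff_zero_eq_eval_zero, ← Polynomial.coe_aeval_eq_eval]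
    exact this
  obtain ⟨a', ha'⟩ := Polynomial.X_dvd_iff.mpr hcoeff
  -- apply e0
  have h0 : e0 k p = a' * Polynomial.X ^ n := by
    have h0' := congrArg (e0 k) hab
    simp only [map_add, map_mul, map_sub, map_pow, e0, aeval_X,
      Matrix.cons_val_zero, Matrix.cons_val_one, Matrix.head_cons] at h0'
    rw [zero_pow (by omega)] at h0'
    rw [show aeval ![Polynomial.X, (0 : Polynomial k)] a = e0 k a from rfl, ha'] at h0'
    apply mul_left_cancel₀ (Polynomial.X_ne_zero (R := k))
    show Polynomial.X * (aeval ![Polynomial.X, 0] p : Polynomial k) = _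
    linear_combination -h0'
  -- conclude
  obtain ⟨t, ht⟩ := Ideal.mem_span_singleton.mp (sub_L_e0_mem k p)
  have hp : p = MvPolynomial.X 1 * t + L k a' * (MvPolynomial.X 0) ^ n := by
    have : L k (e0 k p) = L k a' * (MvPolynomial.X 0) ^ n := by
      rw [h0, map_mul, map_pow]
      rw [show L k Polynomial.X = MvPolynomial.X 0 from Polynomial.aeval_X _]
    rw [← this]
    rw [mul_comm] at ht
    linear_combination ht
  have hxy : (Ideal.Quotient.mk _ (MvPolynomial.X 0 ^ n : MvPolynomial (Fin 2) k) :
      DihedralAlg k n s) = Ideal.Quotient.mk _ (MvPolynomial.X 1 ^ s) := by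
    rw [Ideal.Quotient.eq]
    exact Ideal.subset_span (by simp)
  obtain ⟨s', rfl⟩ : ∃ s', s = s' + 1 := ⟨s - 1, by omega⟩
  refine ⟨Ideal.Quotient.mk _ t + Ideal.Quotient.mk _ (L k a') *
    (Ideal.Quotient.mk _ (MvPolynomial.X 1)) ^ s', ?_⟩
  rw [hp, map_add, map_mul, map_mul, hxy, map_pow]
  ring

end Aux

/-- For `A = k[x,y]/(xⁿ - yˢ, xy)`, `T^x = (A ⟶[·x] A)` in degrees `-1`, `0`, and the
chain map `u : T^x ⟶ A⟦1⟧ ⊕ A` with degree `-1` component the identity and degree `0`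
component multiplication by `y`: every morphism `T^x ⟶ A⟦i⟧` in `K^b(proj A)` factors
through `u`, and the mapping cone of `u` is isomorphic to `T^y = (A ⟶[·y] A)`. -/
theorem statement_17 (k : Type u) [Field k] (n s : ℕ) (hn : 2 ≤ n) (hs : 2 ≤ s)
    (u : twoTerm (mulMap (DihedralAlg k n s) (dihedralX k n s)) ⟶
      twoTerm (0 : ModuleCat.of (DihedralAlg k n s) (DihedralAlg k n s) ⟶
        ModuleCat.of (DihedralAlg k n s) (DihedralAlg k n s)))
    (hu1 : u.f (-1) = eqToHom
      ((twoTerm_X_neg_one (mulMap (DihedralAlg k n s) (dihedralX k n s))).trans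
        (twoTerm_X_neg_one (0 : ModuleCat.of (DihedralAlg k n s) (DihedralAlg k n s) ⟶
          ModuleCat.of (DihedralAlg k n s) (DihedralAlg k n s))).symm))
    (hu0 : u.f 0 = eqToHom (twoTerm_X_zero (mulMap (DihedralAlg k n s) (dihedralX k n s))) ≫
      mulMap (DihedralAlg k n s) (dihedralY k n s) ≫
      eqToHom (twoTerm_X_zero (0 : ModuleCat.of (DihedralAlg k n s) (DihedralAlg k n s) ⟶
        ModuleCat.of (DihedralAlg k n s) (DihedralAlg k n s))).symm) :
    (∀ (i : ℤ) (φ : (Kq (DihedralAlg k n s)).obj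
        (twoTerm (mulMap (DihedralAlg k n s) (dihedralX k n s))) ⟶
        ((Kq (DihedralAlg k n s)).obj
          (stalk0 (ModuleCat.of (DihedralAlg k n s) (DihedralAlg k n s))))⟦i⟧),
      ∃ ψ : (Kq (DihedralAlg k n s)).obj
          (twoTerm (0 : ModuleCat.of (DihedralAlg k n s) (DihedralAlg k n s) ⟶
            ModuleCat.of (DihedralAlg k n s) (DihedralAlg k n s))) ⟶
          ((Kq (DihedralAlg k n s)).obj
            (stalk0 (ModuleCat.of (DihedralAlg k n s) (DihedralAlg k n s))))⟦i⟧,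
        φ = (Kq (DihedralAlg k n s)).map u ≫ ψ) ∧
    Nonempty ((Kq (DihedralAlg k n s)).obj (CochainComplex.mappingCone u) ≅
      (Kq (DihedralAlg k n s)).obj
        (twoTerm (mulMap (DihedralAlg k n s) (dihedralY k n s)))) := by
  have hxy : dihedralX k n s * dihedralY k n s = 0 := by
    rw [← map_mul, Ideal.Quotient.eq_zero_iff_mem]
    exact Ideal.subset_span (by simp)
  constructor
  · intro i φ
    have e := ((Kq (DihedralAlg k n s)).commShiftIso i).app
      (stalk0 (ModuleCat.of (DihedralAlg k n s) (DihedralAlg k n s)))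
    obtain ⟨f, hf⟩ := (Kq (DihedralAlg k n s)).map_surjective (φ ≫ e.inv)
    obtain ⟨ψ', hψ'⟩ := Aux.factor (dihedralX k n s) (dihedralY k n s) u hu1 hu0
      (fun c hc => Aux.ann_x (by omega) (by omega) c hc) i f
    refine ⟨(Kq (DihedralAlg k n s)).map ψ' ≫ e.hom, ?_⟩
    rw [← Category.assoc, ← Functor.map_comp, hψ', hf, Category.assoc, Iso.inv_hom_id,
      Category.comp_id]
  · exact ⟨HomotopyCategory.isoOfHomotopyEquiv
      (Aux.hoEquiv (dihedralX k n s) (dihedralY k n s) hxy u hu1 hu0)⟩
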